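/- At every point of the null-shell over the Schwarzschild exterior of mass M with φ_+ ≠ 0 one has the strict inequality Ω·|φ_+| < 2(r+6M)·E. Moreover, there exists a constant c > 0, depending only on M, such that along any radially reduced future-directed null geodesic, on any subinterval where φ_+ ≠ 0, the function s ↦ |log( Ω|φ_+| / (2(r+6M)E) )| is differentiable and its derivative satisfies d/ds |log( Ω|φ_+| / (2(r+6M)E) )| ≤ −c·(E + |p_u|/Ω²)/r². -/

import Mathlib

open Real

set_option maxHeartbeats 1000000

/-- The trapping weight `φ₊ = (r/Ω)·p_{r*} − (r/Ω)·(1+6M/r)^{1/2}·(1−3M/r)·p_t`,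
with `p_t = −E` and `Ω = (1 − 2M/r)^{1/2}`. -/
noncomputable def phiPlus (M E rv pv : ℝ) : ℝ :=
  rv / Real.sqrt (1 - 2 * M / rv) * pv
    - rv / Real.sqrt (1 - 2 * M / rv) * Real.sqrt (1 + 6 * M / rv) * (1 - 3 * M / rv) * (-E)

-- w * phi = rv * g
lemma hwphi_eq (M E rv pv : ℝ) (hrv : 0 < rv) (hom : 0 < 1 - 2 * M / rv) :
    Real.sqrt (1 - 2 * M / rv) * phiPlus M E rv pv
      = rv * (pv + Real.sqrt (1 + 6 * M / rv) * (1 - 3 * M / rv) * E) := by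
  have hw : 0 < Real.sqrt (1 - 2 * M / rv) := Real.sqrt_pos.mpr hom
  unfold phiPlus
  set w := Real.sqrt (1 - 2 * M / rv) with hwdef
  set b := Real.sqrt (1 + 6 * M / rv) with hbdef
  field_simp
  ring

lemma g_ne_zero (M E rv pv : ℝ) (hrv : 0 < rv) (hom : 0 < 1 - 2 * M / rv)
    (hphi : phiPlus M E rv pv ≠ 0) :
    pv + Real.sqrt (1 + 6 * M / rv) * (1 - 3 * M / rv) * E ≠ 0 := by
  intro h
  apply hphi
  have hw : 0 < Real.sqrt (1 - 2 * M / rv) := Real.sqrt_pos.mpr hom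
  have := hwphi_eq M E rv pv hrv hom
  rw [h, mul_zero] at this
  exact (mul_eq_zero.mp this).resolve_left (ne_of_gt hw)

lemma phiPlus_lt (M : ℝ) (hM : 0 < M) (rv pv E ℓ : ℝ) (hr : 2 * M < rv) (hE : 0 < E)
    (hnull : E ^ 2 = pv ^ 2 + (1 - 2 * M / rv) * ℓ ^ 2 / rv ^ 2) :
    Real.sqrt (1 - 2 * M / rv) * |phiPlus M E rv pv| < 2 * (rv + 6 * M) * E := by
  have hrv : 0 < rv := lt_trans (by linarith) hr
  have hom : 0 < 1 - 2 * M / rv := by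
    rw [sub_pos, div_lt_one hrv]; linarith
  have hw : 0 < Real.sqrt (1 - 2 * M / rv) := Real.sqrt_pos.mpr hom
  set w := Real.sqrt (1 - 2 * M / rv) with hwdef
  have hb : 0 < Real.sqrt (1 + 6 * M / rv) := by
    apply Real.sqrt_pos.mpr; positivity
  set b := Real.sqrt (1 + 6 * M / rv) with hbdef
  have hb2 : b ^ 2 = 1 + 6 * M / rv := Real.sq_sqrt (by positivity)
  have hpv2 : pv ^ 2 ≤ E ^ 2 := by
    have : 0 ≤ (1 - 2 * M / rv) * ℓ ^ 2 / rv ^ 2 := by positivity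
    linarith
  have hpvE : |pv| ≤ E := by
    nlinarith [sq_abs pv, abs_nonneg pv]
  have hu1 : 0 < M / rv := by positivity
  have hu2 : 2 * (M / rv) < 1 := by
    have e : 2 * (M / rv) = 2 * M / rv := by ring
    rw [e, div_lt_one hrv]; linarith
  have hq2 : (1 + 6 * M / rv) * (1 - 3 * M / rv) ^ 2 < 1 := by
    have e1 : 6 * M / rv = 6 * (M / rv) := by ring
    have e2 : 3 * M / rv = 3 * (M / rv) := by ring
    rw [e1, e2]
    nlinarith [mul_pos (mul_pos hu1 hu1) (by linarith : (0:ℝ) < 1 - 2 * (M / rv))]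
  have hq : |b * (1 - 3 * M / rv)| < 1 := by
    nlinarith [sq_abs (b * (1 - 3 * M / rv)), abs_nonneg (b * (1 - 3 * M / rv)), hb2]
  set g := pv + b * (1 - 3 * M / rv) * E with hgdef
  have hwphi : w * phiPlus M E rv pv = rv * g := hwphi_eq M E rv pv hrv hom
  have habs : w * |phiPlus M E rv pv| = rv * |g| := by
    have h1 : w * |phiPlus M E rv pv| = |w * phiPlus M E rv pv| := by
      rw [abs_mul, abs_of_pos hw]
    rw [h1, hwphi, abs_mul, abs_of_pos hrv]
  rw [habs]
  have hgle : |g| ≤ |pv| + |b * (1 - 3 * M / rv)| * E := by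
    calc |g| ≤ |pv| + |b * (1 - 3 * M / rv) * E| := abs_add_le _ _
    _ = |pv| + |b * (1 - 3 * M / rv)| * E := by
        rw [abs_mul, abs_of_pos hE]
  nlinarith [mul_le_mul_of_nonneg_left hgle (le_of_lt hrv),
    mul_le_mul_of_nonneg_left hpvE (le_of_lt hrv),
    mul_lt_mul_of_pos_left hq (mul_pos hrv hE)]

-- the pointwise rewriting of the log function
lemma eq_log (M : ℝ) (hM : 0 < M) (rv pv E ℓ : ℝ) (hr : 2 * M < rv) (hE : 0 < E)
    (hnull : E ^ 2 = pv ^ 2 + (1 - 2 * M / rv) * ℓ ^ 2 / rv ^ 2)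
    (hphi : phiPlus M E rv pv ≠ 0) :
    |Real.log (Real.sqrt (1 - 2 * M / rv) * |phiPlus M E rv pv| / (2 * (rv + 6 * M) * E))|
      = -(Real.log rv
          + 1 / 2 * Real.log ((pv + Real.sqrt (1 + 6 * M / rv) * (1 - 3 * M / rv) * E) ^ 2)
          - Real.log (2 * (rv + 6 * M) * E)) := by
  have hrv : 0 < rv := lt_trans (by linarith) hr
  have hom : 0 < 1 - 2 * M / rv := by
    rw [sub_pos, div_lt_one hrv]; linarith
  have hw : 0 < Real.sqrt (1 - 2 * M / rv) := Real.sqrt_pos.mpr hom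
  set g := pv + Real.sqrt (1 + 6 * M / rv) * (1 - 3 * M / rv) * E with hgdef
  have hg : g ≠ 0 := g_ne_zero M E rv pv hrv hom hphi
  have habs : Real.sqrt (1 - 2 * M / rv) * |phiPlus M E rv pv| = rv * |g| := by
    have h1 : Real.sqrt (1 - 2 * M / rv) * |phiPlus M E rv pv|
        = |Real.sqrt (1 - 2 * M / rv) * phiPlus M E rv pv| := by
      rw [abs_mul, abs_of_pos hw]
    rw [h1, hwphi_eq M E rv pv hrv hom, abs_mul, abs_of_pos hrv]
  have hden : (0:ℝ) < 2 * (rv + 6 * M) * E := by positivity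
  have hratio_pos : 0 < rv * |g| / (2 * (rv + 6 * M) * E) := by
    apply div_pos (mul_pos hrv (abs_pos.mpr hg)) hden
  have hratio_lt : rv * |g| / (2 * (rv + 6 * M) * E) < 1 := by
    rw [div_lt_one hden, ← habs]
    exact phiPlus_lt M hM rv pv E ℓ hr hE hnull
  rw [habs]
  have hlogneg : Real.log (rv * |g| / (2 * (rv + 6 * M) * E)) < 0 :=
    Real.log_neg hratio_pos hratio_lt
  rw [abs_of_neg hlogneg]
  congr 1
  rw [Real.log_div (by positivity) (ne_of_gt hden), Real.log_mul (ne_of_gt hrv) (abs_ne_zero.mpr hg)]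
  have : Real.log |g| = 1 / 2 * Real.log (g ^ 2) := by
    rw [Real.log_pow, Real.log_abs]
    push_cast
    ring
  rw [this]

lemma final_ineq (M R P E : ℝ) (hM : 0 < M) (hR0 : 0 < R) (hR2M : 0 < R - 2 * M)
    (hP1 : P ≤ E) (hP2 : -E ≤ P) :
    M * (E + (E + P) / 2 / (1 - 2 * M / R)) / R ^ 2
      ≤ P / R + E * (R + 2 * M) / ((R - 2 * M) * (R + 6 * M))
        - (R - 3 * M) * P / (R * (R - 2 * M)) - P / (R + 6 * M) := by
  have hRne : R ≠ 0 := ne_of_gt hR0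
  have hR2Mne : R - 2 * M ≠ 0 := ne_of_gt hR2M
  rw [← sub_nonneg]
  have hdiff : P / R + E * (R + 2 * M) / ((R - 2 * M) * (R + 6 * M))
      - (R - 3 * M) * P / (R * (R - 2 * M)) - P / (R + 6 * M)
      - M * (E + (E + P) / 2 / (1 - 2 * M / R)) / R ^ 2
      = ((E + P) * (M * (3 * R ^ 2 - 4 * M * R + 12 * M ^ 2))
          + (E - P) * (2 * (R - 2 * M) * (R ^ 2 + M * R - 3 * M ^ 2)))
        / (2 * R ^ 2 * (R + 6 * M) * (R - 2 * M)) := by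
    have hR6 : R + 6 * M ≠ 0 := by positivity
    field_simp
    ring
  rw [hdiff]
  apply div_nonneg _ (by positivity)
  have t1 : 0 ≤ (E + P) * (M * (3 * R ^ 2 - 4 * M * R + 12 * M ^ 2)) := by
    apply mul_nonneg (by linarith)
    nlinarith [sq_nonneg (R - 2 * M)]
  have t2 : 0 ≤ (E - P) * (2 * (R - 2 * M) * (R ^ 2 + M * R - 3 * M ^ 2)) := by
    apply mul_nonneg (by linarith)
    nlinarith [mul_pos hR2M (show (0:ℝ) < R + 2 * M by linarith), mul_pos hM hR0]
  linarith


/-- at every point of the null-shell with `φ₊ ≠ 0` one has the strict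
inequality `Ω|φ₊| < 2(r+6M)·E`; moreover, there exists `c > 0`, depending only on `M`,
such that along any radially reduced future-directed null geodesic on which `φ₊ ≠ 0`,
the function `s ↦ |log(Ω|φ₊|/(2(r+6M)E))|` is differentiable with derivative
`≤ −c·(E + |p_u|/Ω²)/r²`, where `|p_u| = (E + p_{r*})/2`. -/
theorem schwarzschild_log_phiPlus_estimate (M : ℝ) (hM : 0 < M) :
    (∀ rv pv E ℓ : ℝ, 2 * M < rv → 0 < E → 0 ≤ ℓ →
        E ^ 2 = pv ^ 2 + (1 - 2 * M / rv) * ℓ ^ 2 / rv ^ 2 →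
        phiPlus M E rv pv ≠ 0 →
        Real.sqrt (1 - 2 * M / rv) * |phiPlus M E rv pv| < 2 * (rv + 6 * M) * E) ∧
    ∃ c > 0, ∀ (I : Set ℝ), I.OrdConnected →
      ∀ (r prs : ℝ → ℝ) (E ℓ : ℝ), 0 < E → 0 ≤ ℓ →
      (∀ s ∈ I, 2 * M < r s) →
      (∀ s ∈ I, HasDerivWithinAt r (prs s) I s) →
      (∀ s ∈ I, HasDerivWithinAt prs ((r s - 3 * M) / (r s) ^ 4 * ℓ ^ 2) I s) →
      (∀ s ∈ I, E ^ 2 = (prs s) ^ 2 + (1 - 2 * M / r s) * ℓ ^ 2 / (r s) ^ 2) →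
      (∀ s ∈ I, phiPlus M E (r s) (prs s) ≠ 0) →
      ∀ s ∈ I, ∃ d,
        HasDerivWithinAt
          (fun u => |Real.log (Real.sqrt (1 - 2 * M / r u) * |phiPlus M E (r u) (prs u)|
              / (2 * (r u + 6 * M) * E))|) d I s ∧
        d ≤ -c * (E + ((E + prs s) / 2) / (1 - 2 * M / r s)) / (r s) ^ 2 := by
  constructor
  · intro rv pv E ℓ hr hE _ hnull _
    exact phiPlus_lt M hM rv pv E ℓ hr hE hnull
  refine ⟨M, hM, ?_⟩
  intro I hI r prs E ℓ hE hℓ hr2M hr' hp' hnull hphi s hs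
  set R := r s with hRdef
  set P := prs s with hPdef
  have hR := hr2M s hs
  have hR0 : 0 < R := lt_trans (by linarith) hR
  have hRne : R ≠ 0 := ne_of_gt hR0
  have hR2M : 0 < R - 2 * M := by linarith
  have hom : 0 < 1 - 2 * M / R := by rw [sub_pos, div_lt_one hR0]; linarith
  have hb0 : 0 < Real.sqrt (1 + 6 * M / R) := Real.sqrt_pos.mpr (by positivity)
  set b := Real.sqrt (1 + 6 * M / R) with hbdef
  have hb2 : b ^ 2 = 1 + 6 * M / R := Real.sq_sqrt (by positivity)
  set Gs := P + b * (1 - 3 * M / R) * E with hGsdef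
  have hGs : Gs ≠ 0 := g_ne_zero M E R P hR0 hom (hphi s hs)
  -- derivatives
  have hrd : HasDerivWithinAt r P I s := hr' s hs
  have hpd : HasDerivWithinAt prs ((R - 3 * M) / R ^ 4 * ℓ ^ 2) I s := hp' s hs
  -- derivative of u ↦ 6*M / r u
  have h6 : HasDerivWithinAt (fun u => 6 * M / r u) (-(6 * M * P) / R ^ 2) I s := by
    have h := (hasDerivWithinAt_const s I (6 * M)).div hrd hRne
    exact h.congr_deriv (by ring)
  have h3 : HasDerivWithinAt (fun u => 3 * M / r u) (-(3 * M * P) / R ^ 2) I s := by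
    have h := (hasDerivWithinAt_const s I (3 * M)).div hrd hRne
    exact h.congr_deriv (by ring)
  have hin : HasDerivWithinAt (fun u => 1 + 6 * M / r u) (-(6 * M * P) / R ^ 2) I s :=
    h6.const_add 1
  have hlin : HasDerivWithinAt (fun u => 1 - 3 * M / r u) (3 * M * P / R ^ 2) I s := by
    have h := h3.const_sub 1
    exact h.congr_deriv (by ring)
  have hsq : HasDerivWithinAt (fun u => Real.sqrt (1 + 6 * M / r u))
      (1 / (2 * b) * (-(6 * M * P) / R ^ 2)) I s := by
    have hx : (1 : ℝ) + 6 * M / r s ≠ 0 := by positivity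
    exact (Real.hasDerivAt_sqrt hx).comp_hasDerivWithinAt s hin
  set db := 1 / (2 * b) * (-(6 * M * P) / R ^ 2) with hdbdef
  set Gd := (R - 3 * M) / R ^ 4 * ℓ ^ 2
      + (db * (1 - 3 * M / R) + b * (3 * M * P / R ^ 2)) * E with hGddef
  have hGderiv : HasDerivWithinAt
      (fun u => prs u + Real.sqrt (1 + 6 * M / r u) * (1 - 3 * M / r u) * E) Gd I s :=
    hpd.add (((hsq.mul hlin).mul_const E))
  -- derivative of the full f₂
  have hGs2 : Gs ^ 2 ≠ 0 := pow_ne_zero 2 hGs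
  have hlogG2 : HasDerivWithinAt
      (fun u => Real.log ((prs u + Real.sqrt (1 + 6 * M / r u) * (1 - 3 * M / r u) * E) ^ 2))
      (((2 : ℕ) * Gs ^ 1 * Gd) / Gs ^ 2) I s :=
    (hGderiv.pow 2).log hGs2
  have hlogr : HasDerivWithinAt (fun u => Real.log (r u)) (P / R) I s := hrd.log hRne
  have hdenne : (2 * (R + 6 * M) * E) ≠ 0 := by positivity
  have hlogden : HasDerivWithinAt (fun u => Real.log (2 * (r u + 6 * M) * E))
      ((2 * P * E) / (2 * (R + 6 * M) * E)) I s := by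
    have h : HasDerivWithinAt (fun u => 2 * (r u + 6 * M) * E) (2 * P * E) I s :=
      ((hrd.add_const (6 * M)).const_mul 2).mul_const E
    exact h.log hdenne
  set D := -(P / R + Gd / Gs - P / (R + 6 * M)) with hDdef
  have hf2 : HasDerivWithinAt
      (fun u => -(Real.log (r u)
        + 1 / 2 * Real.log ((prs u + Real.sqrt (1 + 6 * M / r u) * (1 - 3 * M / r u) * E) ^ 2)
        - Real.log (2 * (r u + 6 * M) * E))) D I s := by
    have h := ((hlogr.add (hlogG2.const_mul (1 / 2))).sub hlogden).neg
    refine h.congr_deriv ?_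
    rw [hDdef]
    have hR6 : R + 6 * M ≠ 0 := by positivity
    field_simp
    ring
  -- transfer to the original function
  have hf0 : HasDerivWithinAt
      (fun u => |Real.log (Real.sqrt (1 - 2 * M / r u) * |phiPlus M E (r u) (prs u)|
          / (2 * (r u + 6 * M) * E))|) D I s := by
    apply hf2.congr
    · intro u hu
      exact eq_log M hM (r u) (prs u) E ℓ (hr2M u hu) hE (hnull u hu) (hphi u hu)
    · exact eq_log M hM R P E ℓ hR hE (hnull s hs) (hphi s hs)
  have hnl := hnull s hs
  rw [← hRdef, ← hPdef] at hnl
  clear_value D Gd db Gs b P R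
  refine ⟨D, hf0, ?_⟩
  -- now the inequality
  have hl2 : (R - 2 * M) * ℓ ^ 2 = (E ^ 2 - P ^ 2) * R ^ 3 := by
    have h2 : (1 : ℝ) - 2 * M / R = (R - 2 * M) / R := by field_simp
    rw [h2] at hnl
    field_simp at hnl
    nlinarith [hnl]
  -- the key identity : Gd * (R*(R-2M)) * b = Gs * (R*E - (R-3M)*P*b)
  have hR2Mne : R - 2 * M ≠ 0 := ne_of_gt hR2M
  have hbne : b ≠ 0 := ne_of_gt hb0
  have hb2R : b ^ 2 * R = R + 6 * M := by rw [hb2, add_mul, div_mul_cancel₀ _ hRne, one_mul]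
  have key : Gd * (R * (R - 2 * M)) * b = Gs * (R * E - (R - 3 * M) * P * b) := by
    rw [hGddef, hGsdef, hdbdef]
    field_simp
    linear_combination (2*P*E*R*(R^2 - 3*R*M + 3*M^2)) * hb2R + (2*b*(R - 3*M)) * hl2
  have hGdGs : Gd / Gs = E / ((R - 2 * M) * b) - (R - 3 * M) * P / (R * (R - 2 * M)) := by
    have h1 : Gd / Gs = (R * E - (R - 3 * M) * P * b) / (R * (R - 2 * M) * b) := by
      rw [div_eq_div_iff hGs (mul_ne_zero (mul_ne_zero hRne hR2Mne) hbne)]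
      linear_combination key
    rw [h1]
    field_simp
  -- bound: b ≤ (R+6M)/(R+2M)
  have hq0 : (0:ℝ) < (R + 6 * M) / (R + 2 * M) := by positivity
  have hbub : b ≤ (R + 6 * M) / (R + 2 * M) := by
    have hb2' : b ^ 2 = (R + 6 * M) / R := by rw [hb2]; field_simp
    have hb2q : b ^ 2 ≤ ((R + 6 * M) / (R + 2 * M)) ^ 2 := by
      rw [hb2', div_pow, div_le_div_iff₀ hR0 (by positivity)]
      nlinarith [mul_nonneg (mul_pos hM hR2M).le (show (0:ℝ) ≤ R + 6 * M by linarith)]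
    nlinarith [hb0, hq0, hb2q]
  have hEb : E * (R + 2 * M) / ((R - 2 * M) * (R + 6 * M)) ≤ E / ((R - 2 * M) * b) := by
    rw [div_le_div_iff₀ (by positivity) (by positivity)]
    have h1 : b * (R + 2 * M) ≤ R + 6 * M := by
      rw [le_div_iff₀ (by positivity : (0:ℝ) < R + 2 * M)] at hbub
      linarith
    nlinarith [mul_le_mul_of_nonneg_left h1 (mul_nonneg hE.le hR2M.le)]
  -- polynomial inequality
  have hpv2 : P ^ 2 ≤ E ^ 2 := by
    have hpos : 0 ≤ (1 - 2 * M / R) * ℓ ^ 2 / R ^ 2 :=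
      div_nonneg (mul_nonneg hom.le (sq_nonneg ℓ)) (sq_nonneg R)
    nlinarith [hnl, hpos]
  have hP1 : P ≤ E := by nlinarith
  have hP2 : -E ≤ P := by nlinarith
  have hfinal := final_ineq M R P E hM hR0 hR2M hP1 hP2
  -- conclude
  have hgoal : M * (E + (E + P) / 2 / (1 - 2 * M / R)) / R ^ 2
      ≤ P / R + Gd / Gs - P / (R + 6 * M) := by
    rw [hGdGs]
    linarith [hEb, hfinal]
  rw [hDdef]
  have h2 : -(P / R + Gd / Gs - P / (R + 6 * M))
      ≤ -(M * (E + (E + P) / 2 / (1 - 2 * M / R)) / R ^ 2) := neg_le_neg hgoal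
  refine le_trans h2 (le_of_eq ?_)
  ring
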